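/- Let H be a complex Hilbert space, let J be a countable index type, and let (θ_j)_{j∈J} be a family of vectors in H together with a constant C ≥ 1 such that for every f ∈ H the family (|⟨f, θ_j⟩|²)_{j∈J} is summable and the frame inequalities ∑_{j∈J} |⟨f, θ_j⟩|² ≤ ‖f‖² ≤ C²·∑_{j∈J} |⟨f, θ_j⟩|² hold. Then there exists a dual family (Θ_j)_{j∈J} of vectors in H such that for every f ∈ H the series ∑_{j∈J} ⟨f, θ_j⟩·Θ_j converges (has sum) to f in H. -/

import Mathlib

open scoped InnerProductSpace

/-- A frame `(θ_j)` in a Hilbert space with frame bounds `1` and `C ≥ 1`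
admits a dual family `(Θ_j)` such that `f = ∑_j ⟨f, θ_j⟩ • Θ_j` for all `f`
(the inner product being linear in `f`). -/
theorem frame_reconstruction {H : Type*} [NormedAddCommGroup H] [InnerProductSpace ℂ H]
    [CompleteSpace H] {J : Type*} [Countable J]
    (θ : J → H) (C : ℝ) (hC : 1 ≤ C)
    (hsum : ∀ f : H, Summable fun j => ‖⟪θ j, f⟫_ℂ‖ ^ 2)
    (hlower : ∀ f : H, (∑' j, ‖⟪θ j, f⟫_ℂ‖ ^ 2) ≤ ‖f‖ ^ 2)
    (hupper : ∀ f : H, ‖f‖ ^ 2 ≤ C ^ 2 * ∑' j, ‖⟪θ j, f⟫_ℂ‖ ^ 2) :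
    ∃ Θ : J → H, ∀ f : H, HasSum (fun j => ⟪θ j, f⟫_ℂ • Θ j) f := by
  classical
  -- Key finite bound: Bessel-type inequality for synthesis sums
  have key : ∀ (c : J → ℂ) (F : Finset J),
      ‖∑ j ∈ F, c j • θ j‖ ^ 2 ≤ ∑ j ∈ F, ‖c j‖ ^ 2 := by
    intro c F
    set v := ∑ j ∈ F, c j • θ j with hv
    rcases eq_or_ne v 0 with h0 | h0
    · rw [h0]
      simp only [norm_zero, ne_eq, OfNat.ofNat_ne_zero, not_false_eq_true, zero_pow]
      exact Finset.sum_nonneg fun j _ => by positivity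
    have h1 : ‖v‖ ^ 2 = ‖(⟪v, v⟫_ℂ)‖ := by
      rw [inner_self_eq_norm_sq_to_K]
      simp [norm_pow]
    have h2 : ⟪v, v⟫_ℂ = ∑ j ∈ F, (starRingEnd ℂ) (c j) * ⟪θ j, v⟫_ℂ := by
      rw [hv, sum_inner]
      exact Finset.sum_congr rfl fun j _ => by rw [inner_smul_left]
    have h3 : ‖(⟪v, v⟫_ℂ)‖ ≤ ∑ j ∈ F, ‖c j‖ * ‖⟪θ j, v⟫_ℂ‖ := by
      rw [h2]
      refine (norm_sum_le _ _).trans_eq ?_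
      exact Finset.sum_congr rfl fun j _ => by simp [norm_mul]
    have h4 : (∑ j ∈ F, ‖c j‖ * ‖⟪θ j, v⟫_ℂ‖) ^ 2 ≤
        (∑ j ∈ F, ‖c j‖ ^ 2) * (∑ j ∈ F, ‖⟪θ j, v⟫_ℂ‖ ^ 2) :=
      Finset.sum_mul_sq_le_sq_mul_sq F _ _
    have h5 : (∑ j ∈ F, ‖⟪θ j, v⟫_ℂ‖ ^ 2) ≤ ‖v‖ ^ 2 :=
      le_trans (Summable.sum_le_tsum F (fun j _ => by positivity) (hsum v)) (hlower v)
    have hvpos : 0 < ‖v‖ := norm_pos_iff.mpr h0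
    have hsnn : 0 ≤ ∑ j ∈ F, ‖c j‖ * ‖⟪θ j, v⟫_ℂ‖ :=
      Finset.sum_nonneg fun j _ => by positivity
    have h6 : (‖v‖ ^ 2) ^ 2 ≤ (∑ j ∈ F, ‖c j‖ ^ 2) * ‖v‖ ^ 2 := by
      calc (‖v‖ ^ 2) ^ 2 = ‖(⟪v, v⟫_ℂ)‖ ^ 2 := by rw [h1]
        _ ≤ (∑ j ∈ F, ‖c j‖ * ‖⟪θ j, v⟫_ℂ‖) ^ 2 := pow_le_pow_left₀ (norm_nonneg _) h3 2
        _ ≤ (∑ j ∈ F, ‖c j‖ ^ 2) * (∑ j ∈ F, ‖⟪θ j, v⟫_ℂ‖ ^ 2) := h4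
        _ ≤ (∑ j ∈ F, ‖c j‖ ^ 2) * ‖v‖ ^ 2 := by
            refine mul_le_mul_of_nonneg_left h5 ?_
            exact Finset.sum_nonneg fun j _ => by positivity
    exact le_of_mul_le_mul_right (by nlinarith [h6]) (pow_pos hvpos 2)
  -- summability of the synthesis series
  have hsummable : ∀ f : H, Summable fun j => ⟪θ j, f⟫_ℂ • θ j := by
    intro f
    rw [summable_iff_vanishing_norm]
    intro ε hε
    obtain ⟨s, hs⟩ := summable_iff_vanishing_norm.mp (hsum f) (ε ^ 2) (by positivity)
    refine ⟨s, fun t ht => ?_⟩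
    have h1 := key (fun j => ⟪θ j, f⟫_ℂ) t
    have h2 := hs t ht
    have h3 : (∑ j ∈ t, ‖⟪θ j, f⟫_ℂ‖ ^ 2) < ε ^ 2 := by
      have : ‖∑ j ∈ t, ‖⟪θ j, f⟫_ℂ‖ ^ 2‖ = ∑ j ∈ t, ‖⟪θ j, f⟫_ℂ‖ ^ 2 := by
        rw [Real.norm_eq_abs, abs_of_nonneg]
        exact Finset.sum_nonneg fun j _ => by positivity
      rwa [this] at h2
    nlinarith [norm_nonneg (∑ j ∈ t, ⟪θ j, f⟫_ℂ • θ j)]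
  have hS0 : ∀ f : H, HasSum (fun j => ⟪θ j, f⟫_ℂ • θ j) (∑' j, ⟪θ j, f⟫_ℂ • θ j) :=
    fun f => (hsummable f).hasSum
  -- the frame operator as a linear map
  let S₀ : H →ₗ[ℂ] H :=
    { toFun := fun f => ∑' j, ⟪θ j, f⟫_ℂ • θ j
      map_add' := fun f g => by
        refine (hS0 (f + g)).unique ?_
        have := (hS0 f).add (hS0 g)
        refine HasSum.congr_fun this fun j => ?_
        rw [inner_add_right, add_smul]
      map_smul' := fun a f => by
        refine (hS0 (a • f)).unique ?_
        have := (hS0 f).const_smul a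
        refine HasSum.congr_fun this fun j => ?_
        rw [inner_smul_right, smul_smul] }
  have hnorm : ∀ f : H, ‖S₀ f‖ ≤ ‖f‖ := by
    intro f
    have h2 : ‖S₀ f‖ ^ 2 ≤ ‖f‖ ^ 2 := by
      have htend : Filter.Tendsto (fun F : Finset J => ‖∑ j ∈ F, ⟪θ j, f⟫_ℂ • θ j‖ ^ 2)
          Filter.atTop (nhds (‖S₀ f‖ ^ 2)) := ((hS0 f).norm.pow 2)
      refine le_of_tendsto htend (Filter.Eventually.of_forall fun F => ?_)
      refine (key _ F).trans (le_trans (Summable.sum_le_tsum F (fun j _ => by positivity) (hsum f))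
        (hlower f))
    nlinarith [norm_nonneg (S₀ f), norm_nonneg f]
  let S : H →L[ℂ] H := S₀.mkContinuous 1 fun f => by simpa using hnorm f
  have hSapp : ∀ f : H, S f = ∑' j, ⟪θ j, f⟫_ℂ • θ j := fun f => rfl
  have hSsum : ∀ f : H, HasSum (fun j => ⟪θ j, f⟫_ℂ • θ j) (S f) := fun f => hS0 f
  -- inner product with S f
  have hself : ∀ f : H, ⟪f, S f⟫_ℂ = ((∑' j, ‖⟪θ j, f⟫_ℂ‖ ^ 2 : ℝ) : ℂ) := by
    intro f
    have h1 := (hSsum f).mapL (innerSL ℂ f)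
    have h2 := (hsum f).hasSum.mapL Complex.ofRealCLM
    refine h1.unique (HasSum.congr_fun h2 fun j => ?_)
    simp only [innerSL_apply_apply, inner_smul_right, Complex.ofRealCLM_apply]
    rw [← inner_conj_symm (θ j) f, mul_comm, Complex.mul_conj]
    norm_cast
    simp only [Complex.normSq_eq_norm_sq]
    rw [← inner_conj_symm f (θ j), Complex.norm_conj]
    simp
  -- coercivity
  have hCpos : (0 : ℝ) < C := lt_of_lt_of_le one_pos hC
  have hcoer : ∀ f : H, ‖f‖ ≤ C ^ 2 * ‖S f‖ := by
    intro f
    rcases eq_or_ne f 0 with rfl | hf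
    · simp
    have h1 : ‖f‖ ^ 2 ≤ C ^ 2 * ‖⟪f, S f⟫_ℂ‖ := by
      rw [hself]
      have hnn : (0 : ℝ) ≤ ∑' j, ‖⟪θ j, f⟫_ℂ‖ ^ 2 := tsum_nonneg fun j => by positivity
      rw [Complex.norm_real, Real.norm_eq_abs, abs_of_nonneg hnn]
      exact hupper f
    have h2 : ‖⟪f, S f⟫_ℂ‖ ≤ ‖f‖ * ‖S f‖ := norm_inner_le_norm f (S f)
    have hfpos : 0 < ‖f‖ := norm_pos_iff.mpr hf
    nlinarith [norm_nonneg (S f), sq_nonneg C]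
  -- injectivity
  have hker : LinearMap.ker (S : H →ₗ[ℂ] H) = ⊥ := by
    rw [LinearMap.ker_eq_bot']
    intro f hf
    have := hcoer f
    rw [show S f = 0 from hf, norm_zero, mul_zero] at this
    exact norm_le_zero_iff.mp this
  -- closed range
  have hanti : AntilipschitzWith (⟨C ^ 2, by positivity⟩ : NNReal) S :=
    ContinuousLinearMap.antilipschitz_of_bound S fun f => hcoer f
  have hclosed : IsClosed (Set.range S) := hanti.isClosed_range S.uniformContinuous
  have hclosed' : IsClosed ((LinearMap.range (S : H →ₗ[ℂ] H) : Submodule ℂ H) : Set H) := by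
    have : ((LinearMap.range (S : H →ₗ[ℂ] H) : Submodule ℂ H) : Set H) = Set.range S := by
      ext x; simp [LinearMap.mem_range]
    rwa [this]
  haveI : CompleteSpace (LinearMap.range (S : H →ₗ[ℂ] H)) := hclosed'.completeSpace_coe
  -- dense (full) range
  have horth : (LinearMap.range (S : H →ₗ[ℂ] H))ᗮ = ⊥ := by
    rw [Submodule.eq_bot_iff]
    intro g hg
    have h0 : ⟪S g, g⟫_ℂ = 0 := hg (S g) (LinearMap.mem_range.mpr ⟨g, rfl⟩)
    have h1 : ⟪g, S g⟫_ℂ = 0 := by rw [← inner_conj_symm, h0]; simp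
    rw [hself] at h1
    have h2 : (∑' j, ‖⟪θ j, g⟫_ℂ‖ ^ 2 : ℝ) = 0 := by exact_mod_cast h1
    have h3 : ‖g‖ ^ 2 ≤ 0 := by
      have := hupper g
      rw [h2, mul_zero] at this
      exact this
    have : ‖g‖ = 0 := by nlinarith [norm_nonneg g]
    exact norm_eq_zero.mp this
  have hrange : LinearMap.range (S : H →ₗ[ℂ] H) = ⊤ := Submodule.orthogonal_eq_bot_iff.mp horth
  -- the inverse of the frame operator
  let E := ContinuousLinearEquiv.ofBijective S hker hrange
  refine ⟨fun j => E.symm (θ j), fun f => ?_⟩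
  have h1 : HasSum (fun j => ⟪θ j, f⟫_ℂ • θ j) (S f) := hSsum f
  have h2 := h1.mapL (E.symm : H →L[ℂ] H)
  have h3 : (E.symm : H →L[ℂ] H) (S f) = f := by
    have : S f = E f := rfl
    rw [this]
    exact E.symm_apply_apply f
  rw [h3] at h2
  refine HasSum.congr_fun h2 fun j => ?_
  simp
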